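/- arXiv:2512.08278 — 2 statements merged into one kernel-verified Lean document; each statement's English description precedes it below -/
import Mathlib

section
/- Let p be an odd prime, g ∈ 𝔽_p[[T]] a power series with zero constant coefficient, and α ∈ ℤ_p. Then at least one of the two power series (1+g)^α(1+T) − 1 and (1+g)^{−α}(1+T) − 1 in 𝔽_p[[T]] has order exactly 1 (i.e. zero constant coefficient and nonzero coefficient of T). (The characteristic-p heart of the dichotomy in the key lemma; it fails for p = 2.) -/
open PowerSeries

/-- For `g ∈ 𝔽_p[[T]]` (intended to have zero constant coefficient),
`(1+g)^α := Σ_{i≥0} c(α,i)·g^i ∈ 𝔽_p[[T]]`, where `c(α,i) ∈ 𝔽_p` is the mod-`p` reduction of the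
`p`-adic binomial coefficient `C(α,i) = Ring.choose α i ∈ ℤ_p`.  Since `g^i` has order `≥ i`
when `g` has zero constant coefficient, the `n`-th coefficient of the sum is the finite sum
over `i ≤ n`. -/
noncomputable def onePlusPow (p : ℕ) [Fact p.Prime] (g : PowerSeries (ZMod p)) (α : ℤ_[p]) :
    PowerSeries (ZMod p) :=
  PowerSeries.mk fun n => ∑ i ∈ Finset.range (n + 1),
    PadicInt.toZMod (Ring.choose α i) * PowerSeries.coeff (R := ZMod p) n (g ^ i)

lemma coeff0_onePlusPow (p : ℕ) [Fact p.Prime] (g : PowerSeries (ZMod p)) (α : ℤ_[p]) :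
    PowerSeries.coeff (R := ZMod p) 0 (onePlusPow p g α) = 1 := by
  simp [onePlusPow, Ring.choose_zero_right]

lemma coeff1_onePlusPow (p : ℕ) [Fact p.Prime] (g : PowerSeries (ZMod p)) (α : ℤ_[p]) :
    PowerSeries.coeff (R := ZMod p) 1 (onePlusPow p g α) =
      PadicInt.toZMod α * PowerSeries.coeff (R := ZMod p) 1 g := by
  simp [onePlusPow, Finset.sum_range_succ, Ring.choose_one_right]

lemma key (p : ℕ) [Fact p.Prime] (g : PowerSeries (ZMod p))
    (hg : PowerSeries.constantCoeff (R := ZMod p) g = 0) (α : ℤ_[p])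
    (h1 : PadicInt.toZMod α * PowerSeries.coeff (R := ZMod p) 1 g + 1 ≠ 0) :
    (onePlusPow p g α * (1 + PowerSeries.X) - 1).order = 1 := by
  rw [show ((1 : ℕ∞)) = ((1 : ℕ) : ℕ∞) by norm_cast, PowerSeries.order_eq_nat]
  constructor
  · have : (PowerSeries.coeff (R := ZMod p)) 1 (onePlusPow p g α * (1 + PowerSeries.X)) =
        PadicInt.toZMod α * PowerSeries.coeff (R := ZMod p) 1 g + 1 := by
      rw [mul_add, mul_one, map_add, coeff1_onePlusPow]
      have := PowerSeries.coeff_succ_mul_X (R := ZMod p) 0 (onePlusPow p g α)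
      rw [this, coeff0_onePlusPow]
    rw [map_sub, this]
    simpa using h1
  · intro i hi
    interval_cases i
    have h0 := coeff0_onePlusPow p g α
    rw [PowerSeries.coeff_zero_eq_constantCoeff] at h0
    simp [h0]


/-- the characteristic-`p` heart of the dichotomy: for an odd prime `p`,
`g ∈ 𝔽_p[[T]]` with zero constant coefficient and `α ∈ ℤ_p`, at least one of the power series
`(1+g)^α(1+T) − 1` and `(1+g)^{−α}(1+T) − 1` has order exactly `1`. -/
theorem order_eq_one_or (p : ℕ) [Fact p.Prime] (hp : Odd p) (g : PowerSeries (ZMod p))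
    (hg : PowerSeries.constantCoeff (R := ZMod p) g = 0) (α : ℤ_[p]) :
    (onePlusPow p g α * (1 + PowerSeries.X) - 1).order = 1 ∨
    (onePlusPow p g (-α) * (1 + PowerSeries.X) - 1).order = 1 := by
  set a := PadicInt.toZMod α * PowerSeries.coeff (R := ZMod p) 1 g with ha
  by_cases h : a + 1 ≠ 0
  · exact Or.inl (key p g hg α h)
  · right
    apply key p g hg (-α)
    push_neg at h
    rw [map_neg, neg_mul, ← ha]
    intro h'
    have haa : a = -1 := by linear_combination h
    have h2 : (2 : ZMod p) = 0 := by linear_combination h' + haa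
    have hp2 : p ∣ 2 := by
      have : ((2 : ℕ) : ZMod p) = 0 := by exact_mod_cast h2
      exact (ZMod.natCast_eq_zero_iff 2 p).mp this
    have hpe : p = 2 := (Nat.prime_dvd_prime_iff_eq Fact.out Nat.prime_two).mp hp2
    rw [hpe] at hp
    exact absurd hp (by decide)
end

section
/- Let p be a prime, f(T) ∈ ℤ_p[[T]] a power series whose constant coefficient f₀ lies in pℤ_p, let f₁ ∈ ℤ_p be the coefficient of T in f, and let α ∈ ℤ_p. If α·f₁ + 1 ∉ pℤ_p, then dim_{𝔽_p} ℤ_p[[S,T]]/I_α(f) = 1. (A uniform criterion combining the cases μ(f) = 0, λ(f) ≥ 1 of the proof of the key lemma; note α·f₁ + 1 is automatically a unit when α ∈ pℤ_p or when f₁ ∈ pℤ_p.) -/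
open PowerSeries

/-- The two-variable power series ring `ℤ_p[[S,T]]`, realized as `(ℤ_p[[T]])[[S]]`:
the outer variable `PowerSeries.X` is `S`, the inner `ℤ_p[[T]] = PowerSeries ℤ_[p]` is the
subring of series not involving `S` (included via `PowerSeries.C`), and `T` is
`C (PowerSeries.X)`. -/
abbrev Lambda (p : ℕ) [Fact p.Prime] : Type := PowerSeries (PowerSeries ℤ_[p])

/-- `(1+S)^α := Σ_{i≥0} C(α,i) S^i ∈ ℤ_p[[S,T]]`, where `C(α,i) = Ring.choose α i ∈ ℤ_p` is the
`p`-adic binomial coefficient `α(α−1)⋯(α−i+1)/i!`. -/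
noncomputable def onePlusSPow (p : ℕ) [Fact p.Prime] (α : ℤ_[p]) : Lambda p :=
  PowerSeries.mk fun i => PowerSeries.C (Ring.choose α i)

/-- The variable `T` of `ℤ_p[[S,T]]`. -/
noncomputable def Tvar (p : ℕ) [Fact p.Prime] : Lambda p :=
  PowerSeries.C (R := PowerSeries ℤ_[p]) PowerSeries.X

/-- The ideal `I_α(f) = ((1+S)^α(1+T) − 1, S − f(T), p)` of `ℤ_p[[S,T]]`. -/
noncomputable def Ialpha (p : ℕ) [Fact p.Prime] (f : PowerSeries ℤ_[p]) (α : ℤ_[p]) :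
    Ideal (Lambda p) :=
  Ideal.span {onePlusSPow p α * (1 + Tvar p) - 1,
    PowerSeries.X - PowerSeries.C (R := PowerSeries ℤ_[p]) f, (p : Lambda p)}

lemma p_mem_Ialpha (p : ℕ) [Fact p.Prime] (f : PowerSeries ℤ_[p]) (α : ℤ_[p]) :
    (p : Lambda p) ∈ Ialpha p f α :=
  Ideal.subset_span (by simp)

/-- The dimension of `R/I` as an `𝔽_p = ZMod p` vector space, for an ideal `I` of `R`
containing `p` (so that the quotient ring is naturally an `𝔽_p`-vector space). -/
noncomputable def fpDim (p : ℕ) {R : Type} [CommRing R] (I : Ideal R)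
    (h : (p : R) ∈ I) : Cardinal :=
  letI : Module (ZMod p) (R ⧸ I) := AddCommGroup.zmodModule (fun x => by
    obtain ⟨y, rfl⟩ := Ideal.Quotient.mk_surjective x
    rw [← map_nsmul, nsmul_eq_mul]
    exact Ideal.Quotient.eq_zero_iff_mem.mpr (I.mul_mem_right y h))
  Module.rank (ZMod p) (R ⧸ I)

/-! ### Auxiliary lemmas -/

lemma onePlusSPow_eq (p : ℕ) [Fact p.Prime] (α : ℤ_[p]) :
    onePlusSPow p α = 1 + PowerSeries.C (PowerSeries.C (R := ℤ_[p]) α) * X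
      + X ^ 2 * PowerSeries.mk (fun i => PowerSeries.C (R := ℤ_[p]) (Ring.choose α (i+2))) := by
  apply PowerSeries.ext; intro n
  rcases n with _|_|n
  · simp [onePlusSPow, Ring.choose_zero_right, coeff_X_pow_mul']
  · simp [onePlusSPow, Ring.choose_one_right, coeff_X_pow_mul']
  · simp [onePlusSPow, coeff_X_pow_mul', coeff_X, coeff_one]

lemma C_C_p_mul (p : ℕ) [Fact p.Prime] (b : ℤ_[p]) :
    PowerSeries.C (R := PowerSeries ℤ_[p]) (PowerSeries.C (R := ℤ_[p]) ((p:ℤ_[p]) * b))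
      = (p : Lambda p) * PowerSeries.C (PowerSeries.C (R := ℤ_[p]) b) := by
  rw [map_mul, map_mul, map_natCast, map_natCast]

section main
variable (p : ℕ) [Fact p.Prime] (f : PowerSeries ℤ_[p]) (α : ℤ_[p])

lemma Tvar_mem (hf0 : PowerSeries.constantCoeff (R := ℤ_[p]) f ∈ Ideal.span {(p : ℤ_[p])})
    (hα : α * PowerSeries.coeff (R := ℤ_[p]) 1 f + 1 ∉ Ideal.span {(p : ℤ_[p])}) :
    Tvar p ∈ Ialpha p f α := by
  obtain ⟨b, hb⟩ := Ideal.mem_span_singleton.mp hf0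
  set h : PowerSeries ℤ_[p] := PowerSeries.mk fun i => coeff (R := ℤ_[p]) (i+1) f with hh
  have hf : f = h * X + PowerSeries.C (R := ℤ_[p]) ((p:ℤ_[p]) * b) := by
    rw [← hb]; exact eq_shift_mul_X_add_const f
  set r : Lambda p := PowerSeries.mk (fun i => PowerSeries.C (R := ℤ_[p]) (Ring.choose α (i+2))) with hr
  set u : Lambda p := PowerSeries.C (PowerSeries.C (R := ℤ_[p]) α) * PowerSeries.C h + 1
      + PowerSeries.C (PowerSeries.C (R := ℤ_[p]) α) * PowerSeries.C h * Tvar p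
      + Tvar p * (PowerSeries.C h) ^ 2 * r * (1 + Tvar p) with hu
  have hu_unit : IsUnit u := by
    rw [isUnit_iff_constantCoeff]
    have e1 : constantCoeff u = PowerSeries.C (R := ℤ_[p]) α * h + 1 + PowerSeries.C (R := ℤ_[p]) α * h * X
        + X * h ^ 2 * (PowerSeries.C (R := ℤ_[p]) (Ring.choose α 2)) * (1 + X) := by
      simp [hu, Tvar, hr, map_add, map_mul, map_one, map_pow]
    rw [e1, isUnit_iff_constantCoeff]
    have e2 : constantCoeff (R := ℤ_[p]) (PowerSeries.C (R := ℤ_[p]) α * h + 1 + PowerSeries.C (R := ℤ_[p]) α * h * X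
        + X * h ^ 2 * (PowerSeries.C (R := ℤ_[p]) (Ring.choose α 2)) * (1 + X))
        = α * coeff (R := ℤ_[p]) 1 f + 1 := by
      simp [hh, map_add, map_mul, map_one, coeff_mk]
    rw [e2]
    by_contra hnu
    exact hα (by rw [← PadicInt.maximalIdeal_eq_span_p]; exact hnu)
  rw [← Ideal.Quotient.eq_zero_iff_mem]
  set π := Ideal.Quotient.mk (Ialpha p f α) with hπ
  have h1 : π (onePlusSPow p α * (1 + Tvar p) - 1) = 0 :=
    Ideal.Quotient.eq_zero_iff_mem.mpr (Ideal.subset_span (by simp))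
  have h2 : π (PowerSeries.X - PowerSeries.C f) = 0 :=
    Ideal.Quotient.eq_zero_iff_mem.mpr (Ideal.subset_span (by simp))
  have h3 : π (p : Lambda p) = 0 :=
    Ideal.Quotient.eq_zero_iff_mem.mpr (Ideal.subset_span (by simp))
  have hCf : PowerSeries.C (R := PowerSeries ℤ_[p]) f
      = PowerSeries.C h * Tvar p + (p : Lambda p) * PowerSeries.C (PowerSeries.C (R := ℤ_[p]) b) := by
    conv_lhs => rw [hf]
    rw [map_add, map_mul, C_C_p_mul, Tvar]
  have hx : π PowerSeries.X = π (PowerSeries.C h) * π (Tvar p) := by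
    have e3 : π PowerSeries.X - π (PowerSeries.C f) = 0 := by rw [← map_sub]; exact h2
    rw [sub_eq_zero] at e3
    rw [e3, hCf, map_add, map_mul, map_mul, h3, zero_mul, add_zero]
  have key : π (Tvar p) * π u = 0 := by
    have expand : onePlusSPow p α * (1 + Tvar p) - 1 =
        Tvar p * u + (PowerSeries.C (PowerSeries.C (R := ℤ_[p]) α) * (1 + Tvar p)
          + (PowerSeries.X + PowerSeries.C h * Tvar p) * r * (1 + Tvar p))
          * (PowerSeries.X - PowerSeries.C h * Tvar p) := by
      rw [onePlusSPow_eq, hu]; ring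
    have hxx : π (PowerSeries.X - PowerSeries.C h * Tvar p) = 0 := by
      rw [map_sub, hx, map_mul, sub_self]
    have e4 := congrArg π expand
    rw [h1, map_add, map_mul, map_mul, hxx, mul_zero, add_zero] at e4
    exact e4.symm
  obtain ⟨w, hw⟩ := hu_unit
  have e5 : (π (Tvar p) * π u) * π ((↑w⁻¹ : Lambda p)) = π (Tvar p) := by
    rw [← hw, mul_assoc, ← map_mul, Units.mul_inv, map_one, mul_one]
  rw [← e5, key, zero_mul]

lemma X_mem (hf0 : PowerSeries.constantCoeff (R := ℤ_[p]) f ∈ Ideal.span {(p : ℤ_[p])})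
    (hα : α * PowerSeries.coeff (R := ℤ_[p]) 1 f + 1 ∉ Ideal.span {(p : ℤ_[p])}) :
    (PowerSeries.X : Lambda p) ∈ Ialpha p f α := by
  obtain ⟨b, hb⟩ := Ideal.mem_span_singleton.mp hf0
  have hf : f = (PowerSeries.mk fun i => coeff (R := ℤ_[p]) (i+1) f) * X
      + PowerSeries.C (R := ℤ_[p]) ((p:ℤ_[p]) * b) := by
    rw [← hb]; exact eq_shift_mul_X_add_const f
  have hT := Tvar_mem p f α hf0 hα
  have hg2 : PowerSeries.X - PowerSeries.C (R := PowerSeries ℤ_[p]) f ∈ Ialpha p f α :=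
    Ideal.subset_span (by simp)
  have hp : (p : Lambda p) ∈ Ialpha p f α := Ideal.subset_span (by simp)
  have heq : PowerSeries.C (R := PowerSeries ℤ_[p]) f
      = PowerSeries.C (PowerSeries.mk fun i => coeff (R := ℤ_[p]) (i+1) f) * Tvar p
        + (p : Lambda p) * PowerSeries.C (PowerSeries.C (R := ℤ_[p]) b) := by
    conv_lhs => rw [hf]
    rw [map_add, map_mul, C_C_p_mul, Tvar]
  have hCf : PowerSeries.C (R := PowerSeries ℤ_[p]) f ∈ Ialpha p f α := by
    rw [heq]
    exact Ideal.add_mem _ (Ideal.mul_mem_left _ _ hT) (Ideal.mul_mem_right _ _ hp)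
  have := Ideal.add_mem _ hg2 hCf
  simpa using this

end main

/-- The residue map `ℤ_p[[S,T]] → 𝔽_p`. -/
noncomputable def resMap (p : ℕ) [Fact p.Prime] : Lambda p →+* ZMod p :=
  (PadicInt.toZMod).comp ((constantCoeff (R := ℤ_[p])).comp (constantCoeff (R := PowerSeries ℤ_[p])))

lemma resMap_surjective (p : ℕ) [Fact p.Prime] : Function.Surjective (resMap p) := by
  intro z
  refine ⟨PowerSeries.C (PowerSeries.C (R := ℤ_[p]) (z.val : ℤ_[p])), ?_⟩
  simp [resMap, map_natCast, ZMod.natCast_val, ZMod.cast_id]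

lemma ker_resMap_le (p : ℕ) [Fact p.Prime] (J : Ideal (Lambda p))
    (hX : (PowerSeries.X : Lambda p) ∈ J)
    (hT : Tvar p ∈ J)
    (hp : ((p : Lambda p)) ∈ J) :
    RingHom.ker (resMap p) ≤ J := by
  intro g hg
  rw [RingHom.mem_ker] at hg
  set g₀ : PowerSeries ℤ_[p] := constantCoeff g with hg₀
  set a₀ : ℤ_[p] := constantCoeff (R := ℤ_[p]) g₀ with ha₀
  have hres : PadicInt.toZMod a₀ = 0 := hg
  have hpa : a₀ ∈ Ideal.span {(p : ℤ_[p])} := by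
    rw [← PadicInt.maximalIdeal_eq_span_p, ← PadicInt.ker_toZMod, RingHom.mem_ker]
    exact hres
  obtain ⟨c, hc⟩ := Ideal.mem_span_singleton.mp hpa
  have hgdec : g = (PowerSeries.mk fun i => coeff (i+1) g) * PowerSeries.X
      + PowerSeries.C g₀ := eq_shift_mul_X_add_const g
  have hg0dec : g₀ = (PowerSeries.mk fun i => coeff (R := ℤ_[p]) (i+1) g₀) * PowerSeries.X
      + PowerSeries.C (R := ℤ_[p]) a₀ := eq_shift_mul_X_add_const g₀
  have hCg₀ : PowerSeries.C (R := PowerSeries ℤ_[p]) g₀ ∈ J := by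
    have : PowerSeries.C (R := PowerSeries ℤ_[p]) g₀
        = PowerSeries.C (PowerSeries.mk fun i => coeff (R := ℤ_[p]) (i+1) g₀) * Tvar p
          + (p : Lambda p) * PowerSeries.C (PowerSeries.C (R := ℤ_[p]) c) := by
      conv_lhs => rw [hg0dec]
      rw [map_add, map_mul, hc, map_mul, map_mul, map_natCast, map_natCast, Tvar]
    rw [this]
    exact Ideal.add_mem _ (Ideal.mul_mem_left _ _ hT) (Ideal.mul_mem_right _ _ hp)
  rw [hgdec]
  exact Ideal.add_mem _ (Ideal.mul_mem_left _ _ hX) hCg₀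

lemma Ialpha_eq_ker (p : ℕ) [Fact p.Prime] (f : PowerSeries ℤ_[p])
    (hf0 : PowerSeries.constantCoeff (R := ℤ_[p]) f ∈ Ideal.span {(p : ℤ_[p])}) (α : ℤ_[p])
    (hα : α * PowerSeries.coeff (R := ℤ_[p]) 1 f + 1 ∉ Ideal.span {(p : ℤ_[p])}) :
    Ialpha p f α = RingHom.ker (resMap p) := by
  apply le_antisymm
  · rw [Ialpha, Ideal.span_le]
    rintro x (rfl | rfl | rfl)
    · rw [SetLike.mem_coe, RingHom.mem_ker]
      have hCf0 : resMap p (PowerSeries.C f) = 0 := by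
        have : constantCoeff (R := ℤ_[p]) f ∈ RingHom.ker (PadicInt.toZMod) := by
          rw [PadicInt.ker_toZMod, PadicInt.maximalIdeal_eq_span_p]; exact hf0
        simpa [resMap] using this
      simp [resMap, onePlusSPow, Tvar, Ring.choose_zero_right, coeff_zero_eq_constantCoeff]
    · rw [SetLike.mem_coe, RingHom.mem_ker]
      have hCf0 : resMap p (PowerSeries.C f) = 0 := by
        have : constantCoeff (R := ℤ_[p]) f ∈ RingHom.ker (PadicInt.toZMod) := by
          rw [PadicInt.ker_toZMod, PadicInt.maximalIdeal_eq_span_p]; exact hf0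
        simpa [resMap] using this
      rw [map_sub, hCf0, sub_zero]
      simp [resMap]
    · rw [SetLike.mem_coe, RingHom.mem_ker]
      simp [resMap, map_natCast, ZMod.natCast_self]
  · exact ker_resMap_le p _ (X_mem p f α hf0 hα) (Tvar_mem p f α hf0 hα) (p_mem_Ialpha p f α)

lemma zmod_rank_aux (p : ℕ) [Fact p.Prime] (M : Type) [AddCommGroup M]
    (i : Module (ZMod p) M) (e : M ≃+ ZMod p) :
    (letI := i; Module.rank (ZMod p) M) = 1 := by
  letI := i
  let e' : M ≃ₗ[ZMod p] ZMod p :=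
    { e with map_smul' := fun c x => ZMod.map_smul e.toAddMonoidHom c x }
  rw [e'.rank_eq, Module.rank_self]

/-- if the constant coefficient `f₀` of `f` lies in `pℤ_p` and
`α·f₁ + 1 ∉ pℤ_p` (where `f₁` is the coefficient of `T` in `f`), then
`dim_{𝔽_p} ℤ_p[[S,T]]/I_α(f) = 1`. -/
theorem fpDim_Ialpha_eq_one (p : ℕ) [Fact p.Prime] (f : PowerSeries ℤ_[p])
    (hf0 : PowerSeries.constantCoeff (R := ℤ_[p]) f ∈ Ideal.span {(p : ℤ_[p])}) (α : ℤ_[p])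
    (hα : α * PowerSeries.coeff (R := ℤ_[p]) 1 f + 1 ∉ Ideal.span {(p : ℤ_[p])}) :
    fpDim p (Ialpha p f α) (p_mem_Ialpha p f α) = 1 := by
  have e : (Lambda p ⧸ Ialpha p f α) ≃+* ZMod p :=
    (Ideal.quotEquivOfEq (Ialpha_eq_ker p f hf0 α hα)).trans
      (RingHom.quotientKerEquivOfSurjective (resMap_surjective p))
  unfold fpDim
  exact zmod_rank_aux p _ _ e.toAddEquiv
end
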